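/- Let N ~ Poisson(μ) with μ ≥ 1. Then the Shannon entropy (in nats) satisfies H(N) ≤ (ln μ)/2 + 3. -/

import Mathlib

noncomputable def Pz (μ : ℝ) (k : ℕ) : ℝ := Real.exp (-μ) * μ ^ k / (Nat.factorial k : ℝ)

lemma sq_mu_le (μ : ℝ) (hμ : 0 ≤ μ) (k : ℕ) : (k:ℝ)^2 * μ ^ k ≤ (4*μ) ^ k := by
  have h1 : (k:ℝ) ≤ 2 ^ k := by exact_mod_cast (@Nat.lt_two_pow_self k).le
  have h2 : (k:ℝ)^2 ≤ 4 ^ k := by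
    calc (k:ℝ)^2 ≤ ((2:ℝ)^k)^2 := by
          apply pow_le_pow_left₀ (Nat.cast_nonneg k) h1
      _ = 4 ^ k := by rw [← pow_mul, mul_comm, pow_mul]; norm_num
  calc (k:ℝ)^2 * μ ^ k ≤ 4 ^ k * μ ^ k := mul_le_mul_of_nonneg_right h2 (pow_nonneg hμ k)
    _ = (4*μ)^k := (mul_pow 4 μ k).symm

lemma summable_sq (μ : ℝ) (hμ : 0 ≤ μ) : Summable (fun k : ℕ => Pz μ k * (k:ℝ)^2) := by
  refine Summable.of_nonneg_of_le (fun k => by unfold Pz; positivity) (fun k => ?_)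
    ((Real.summable_pow_div_factorial (4*μ)).mul_left (Real.exp (-μ)))
  have e1 : Pz μ k * (k:ℝ)^2 = Real.exp (-μ) * ((k:ℝ)^2 * μ^k / (Nat.factorial k : ℝ)) := by
    unfold Pz; ring
  rw [e1]
  exact mul_le_mul_of_nonneg_left
    (div_le_div_of_nonneg_right (sq_mu_le μ hμ k) (by positivity)) (Real.exp_nonneg _)

lemma summable_dom (μ : ℝ) (hμ : 0 ≤ μ) (f : ℕ → ℝ) (hf : ∀ k, |f k| ≤ (k:ℝ)^2) :
    Summable (fun k => Pz μ k * f k) := by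
  refine (Summable.of_nonneg_of_le (fun k => abs_nonneg _) (fun k => ?_) (summable_sq μ hμ)).of_abs
  have hp : 0 ≤ Pz μ k := by unfold Pz; positivity
  rw [abs_mul, abs_of_nonneg hp]
  exact mul_le_mul_of_nonneg_left (hf k) hp

lemma exp_tsum (x : ℝ) : ∑' n : ℕ, x ^ n / (Nat.factorial n : ℝ) = Real.exp x := by
  rw [Real.exp_eq_exp_ℝ, NormedSpace.exp_eq_tsum_div]

lemma summable_Pz (μ : ℝ) : Summable (Pz μ) := by
  have := (Real.summable_pow_div_factorial μ).mul_left (Real.exp (-μ))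
  unfold Pz
  simp only [mul_div_assoc]
  exact this

lemma tsum_Pz (μ : ℝ) : ∑' k, Pz μ k = 1 := by
  have h : ∑' k, Pz μ k = Real.exp (-μ) * ∑' k : ℕ, μ ^ k / (Nat.factorial k : ℝ) := by
    rw [← tsum_mul_left]; simp [Pz, mul_div_assoc]
  rw [h, exp_tsum, ← Real.exp_add]; simp

lemma Pz_succ (μ : ℝ) (k : ℕ) : ((k:ℝ)+1) * Pz μ (k+1) = μ * Pz μ k := by
  have h : ((Nat.factorial k : ℝ)) ≠ 0 := Nat.cast_ne_zero.mpr (Nat.factorial_ne_zero k)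
  unfold Pz
  rw [Nat.factorial_succ, pow_succ]
  push_cast
  field_simp

lemma tsum_shift {f : ℕ → ℝ} (hf : Summable f) (h0 : f 0 = 0) :
    ∑' k, f k = ∑' k, f (k + 1) := by
  rw [hf.tsum_eq_zero_add, h0, zero_add]

lemma nat_cast_cases (k : ℕ) : (k:ℝ) = 0 ∨ 1 ≤ (k:ℝ) := by
  rcases Nat.eq_zero_or_pos k with h | h
  · left; simp [h]
  · right; exact_mod_cast h

lemma summable_kPz (μ : ℝ) (hμ : 0 ≤ μ) : Summable (fun k : ℕ => (k:ℝ) * Pz μ k) := by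
  have := summable_dom μ hμ (fun k => (k:ℝ)) (fun k => by
    rw [abs_of_nonneg (Nat.cast_nonneg k)]
    rcases nat_cast_cases k with h | h <;> nlinarith)
  simpa [mul_comm] using this

lemma tsum_kPz (μ : ℝ) (hμ : 0 ≤ μ) : ∑' k : ℕ, (k:ℝ) * Pz μ k = μ := by
  rw [tsum_shift (summable_kPz μ hμ) (by simp)]
  have h : ∀ k : ℕ, ((k+1:ℕ):ℝ) * Pz μ (k+1) = μ * Pz μ k := by
    intro k; push_cast; exact Pz_succ μ k
  calc ∑' k : ℕ, ((k+1:ℕ):ℝ) * Pz μ (k+1) = ∑' k : ℕ, μ * Pz μ k := by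
        exact tsum_congr h
    _ = μ := by rw [tsum_mul_left, tsum_Pz, mul_one]

lemma summable_kkPz (μ : ℝ) (hμ : 0 ≤ μ) : Summable (fun k : ℕ => (k:ℝ) * ((k:ℝ)-1) * Pz μ k) := by
  have := summable_dom μ hμ (fun k => (k:ℝ) * ((k:ℝ)-1)) (fun k => by
    rw [abs_of_nonneg (by rcases nat_cast_cases k with h | h <;> nlinarith : (0:ℝ) ≤ (k:ℝ) * ((k:ℝ)-1))]
    nlinarith [Nat.cast_nonneg (α := ℝ) k])
  simpa [mul_comm] using this

lemma tsum_kkPz (μ : ℝ) (hμ : 0 ≤ μ) : ∑' k : ℕ, (k:ℝ) * ((k:ℝ)-1) * Pz μ k = μ^2 := by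
  rw [tsum_shift (summable_kkPz μ hμ) (by simp)]
  have hs : Summable (fun k : ℕ => ((k+1:ℕ):ℝ) * (((k+1:ℕ):ℝ)-1) * Pz μ (k+1)) :=
    (summable_nat_add_iff 1).mpr (summable_kkPz μ hμ)
  rw [tsum_shift hs (by simp)]
  have h : ∀ k : ℕ, ((k+1+1:ℕ):ℝ) * (((k+1+1:ℕ):ℝ)-1) * Pz μ (k+1+1) = μ^2 * Pz μ k := by
    intro k
    have h1 := Pz_succ μ (k+1)
    have h2 := Pz_succ μ k
    push_cast at h1 ⊢
    nlinarith [h1, h2]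
  calc ∑' k : ℕ, ((k+1+1:ℕ):ℝ) * (((k+1+1:ℕ):ℝ)-1) * Pz μ (k+1+1) = ∑' k : ℕ, μ^2 * Pz μ k :=
        tsum_congr h
    _ = μ^2 := by rw [tsum_mul_left, tsum_Pz, mul_one]

lemma tsum_sqPz (μ : ℝ) (hμ : 0 ≤ μ) : ∑' k : ℕ, (k:ℝ)^2 * Pz μ k = μ^2 + μ := by
  have h : ∀ k : ℕ, (k:ℝ)^2 * Pz μ k = (k:ℝ) * ((k:ℝ)-1) * Pz μ k + (k:ℝ) * Pz μ k := by
    intro k; ring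
  rw [tsum_congr h, Summable.tsum_add (summable_kkPz μ hμ) (summable_kPz μ hμ), tsum_kkPz μ hμ, tsum_kPz μ hμ]

lemma log_nat_nonneg (k : ℕ) : 0 ≤ Real.log k := by
  rcases Nat.eq_zero_or_pos k with h | h
  · simp [h]
  · exact Real.log_nonneg (by exact_mod_cast h)

lemma log_nat_le (k : ℕ) : Real.log k ≤ (k:ℝ) := by
  rcases Nat.eq_zero_or_pos k with h | h
  · simp [h]
  · have : (0:ℝ) < k := by exact_mod_cast h
    linarith [Real.log_le_sub_one_of_pos this]

lemma log_fact_nonneg (k : ℕ) : 0 ≤ Real.log (Nat.factorial k : ℝ) :=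
  Real.log_nonneg (by exact_mod_cast Nat.one_le_iff_ne_zero.mpr (Nat.factorial_ne_zero k))

lemma log_fact_le (k : ℕ) : Real.log (Nat.factorial k : ℝ) ≤ (k:ℝ) * Real.log k := by
  have h1 : ((Nat.factorial k : ℕ):ℝ) ≤ ((k^k : ℕ):ℝ) := by exact_mod_cast Nat.factorial_le_pow k
  have h2 : (0:ℝ) < (Nat.factorial k : ℝ) := by exact_mod_cast Nat.factorial_pos k
  calc Real.log (Nat.factorial k : ℝ) ≤ Real.log ((k^k : ℕ):ℝ) := Real.log_le_log h2 h1
    _ = (k:ℝ) * Real.log k := by push_cast; rw [Real.log_pow]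

lemma stirling_bound (k : ℕ) :
    Real.log (Nat.factorial k : ℝ) ≤ (k:ℝ) * Real.log k - k + (1/2) * Real.log k + 1 := by
  rcases Nat.eq_zero_or_pos k with h | h
  · simp [h]
  · obtain ⟨j, rfl⟩ := Nat.exists_eq_add_of_le h
    set n := 1 + j with hn
    have hform := Stirling.log_stirlingSeq_formula n
    have hanti : Real.log (Stirling.stirlingSeq n) ≤ Real.log (Stirling.stirlingSeq 1) := by
      have := Stirling.log_stirlingSeq'_antitone (Nat.zero_le j)
      simpa [hn, Nat.succ_eq_add_one, Nat.add_comm] using this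
    have h1 : Real.log (Stirling.stirlingSeq 1) = 1 - (1/2) * Real.log 2 := by
      rw [Stirling.stirlingSeq_one, Real.log_div (Real.exp_ne_zero 1) (by positivity),
        Real.log_exp, Real.log_sqrt (by norm_num)]
      ring
    have hnpos : (0:ℝ) < n := by positivity
    have h2 : Real.log (2 * (n:ℝ)) = Real.log 2 + Real.log n :=
      Real.log_mul (by norm_num) (ne_of_gt hnpos)
    have h3 : Real.log ((n:ℝ) / Real.exp 1) = Real.log n - 1 := by
      rw [Real.log_div (ne_of_gt hnpos) (Real.exp_ne_zero 1), Real.log_exp]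
    rw [h1] at hanti
    rw [hform, h2, h3] at hanti
    nlinarith [hanti]

lemma log_nat_le_sq (k : ℕ) : |Real.log k| ≤ (k:ℝ)^2 := by
  rw [abs_of_nonneg (log_nat_nonneg k)]
  have := log_nat_le k
  rcases nat_cast_cases k with h | h
  · simp [h]
  · nlinarith

lemma summable_logPz (μ : ℝ) (hμ : 0 ≤ μ) : Summable (fun k : ℕ => Pz μ k * Real.log k) :=
  summable_dom μ hμ _ log_nat_le_sq

lemma summable_klogPz (μ : ℝ) (hμ : 0 ≤ μ) :
    Summable (fun k : ℕ => Pz μ k * ((k:ℝ) * Real.log k)) := by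
  apply summable_dom μ hμ
  intro k
  rw [abs_of_nonneg (mul_nonneg (Nat.cast_nonneg k) (log_nat_nonneg k))]
  have h1 := log_nat_le k
  nlinarith [Nat.cast_nonneg (α := ℝ) k]

lemma summable_logfactPz (μ : ℝ) (hμ : 0 ≤ μ) :
    Summable (fun k : ℕ => Pz μ k * Real.log (Nat.factorial k : ℝ)) := by
  apply summable_dom μ hμ
  intro k
  rw [abs_of_nonneg (log_fact_nonneg k)]
  have h1 := log_fact_le k
  have h2 := log_nat_le k
  nlinarith [Nat.cast_nonneg (α := ℝ) k]

-- tangent-line bound: for all k, log k ≤ log μ + k/μ   (μ ≥ 1)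
lemma log_nat_tangent {μ : ℝ} (hμ : 1 ≤ μ) (k : ℕ) :
    Real.log k ≤ Real.log μ + (k:ℝ)/μ := by
  have hμ0 : (0:ℝ) < μ := by linarith
  rcases Nat.eq_zero_or_pos k with h | h
  · simp [h]; exact Real.log_nonneg hμ
  · have hk : (0:ℝ) < k := by exact_mod_cast h
    have := Real.log_le_sub_one_of_pos (div_pos hk hμ0)
    rw [Real.log_div (ne_of_gt hk) (ne_of_gt hμ0)] at this
    linarith

lemma tsum_L {μ : ℝ} (hμ : 1 ≤ μ) :
    ∑' k : ℕ, Pz μ k * Real.log k ≤ Real.log μ + 1 := by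
  have hμ0 : (0:ℝ) < μ := by linarith
  have hb : ∀ k : ℕ, Pz μ k * Real.log k ≤
      Real.log μ * Pz μ k + (1/μ) * ((k:ℝ) * Pz μ k) := by
    intro k
    have hp : 0 ≤ Pz μ k := by unfold Pz; positivity
    have ht := log_nat_tangent hμ k
    have := mul_le_mul_of_nonneg_left ht hp
    calc Pz μ k * Real.log k ≤ Pz μ k * (Real.log μ + (k:ℝ)/μ) := this
      _ = Real.log μ * Pz μ k + (1/μ) * ((k:ℝ) * Pz μ k) := by field_simp
  have hs : Summable (fun k : ℕ => Real.log μ * Pz μ k + (1/μ) * ((k:ℝ) * Pz μ k)) :=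
    ((summable_Pz μ).mul_left _).add ((summable_kPz μ hμ0.le).mul_left _)
  calc ∑' k : ℕ, Pz μ k * Real.log k
      ≤ ∑' k : ℕ, (Real.log μ * Pz μ k + (1/μ) * ((k:ℝ) * Pz μ k)) :=
        Summable.tsum_le_tsum hb (summable_logPz μ hμ0.le) hs
    _ = Real.log μ * 1 + (1/μ) * μ := by
        rw [Summable.tsum_add ((summable_Pz μ).mul_left _) ((summable_kPz μ hμ0.le).mul_left _),
          tsum_mul_left, tsum_mul_left, tsum_Pz, tsum_kPz μ hμ0.le]
    _ = Real.log μ + 1 := by field_simp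

lemma tsum_T {μ : ℝ} (hμ : 1 ≤ μ) :
    ∑' k : ℕ, Pz μ k * ((k:ℝ) * Real.log k) ≤ μ * Real.log μ + 1 := by
  have hμ0 : (0:ℝ) < μ := by linarith
  have hb : ∀ k : ℕ, Pz μ k * ((k:ℝ) * Real.log k) ≤
      Real.log μ * ((k:ℝ) * Pz μ k) + (1/μ) * ((k:ℝ)^2 * Pz μ k) - (k:ℝ) * Pz μ k := by
    intro k
    have hp : 0 ≤ Pz μ k := by unfold Pz; positivity
    rcases Nat.eq_zero_or_pos k with h | h
    · simp [h]
    · have hk : (0:ℝ) < k := by exact_mod_cast h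
      have ht : Real.log k ≤ Real.log μ + (k:ℝ)/μ - 1 := by
        have := Real.log_le_sub_one_of_pos (div_pos hk hμ0)
        rw [Real.log_div (ne_of_gt hk) (ne_of_gt hμ0)] at this
        linarith
      have h2 : (k:ℝ) * Real.log k ≤ (k:ℝ) * (Real.log μ + (k:ℝ)/μ - 1) :=
        mul_le_mul_of_nonneg_left ht hk.le
      have h3 := mul_le_mul_of_nonneg_left h2 hp
      calc Pz μ k * ((k:ℝ) * Real.log k) ≤ Pz μ k * ((k:ℝ) * (Real.log μ + (k:ℝ)/μ - 1)) := h3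
        _ = Real.log μ * ((k:ℝ) * Pz μ k) + (1/μ) * ((k:ℝ)^2 * Pz μ k) - (k:ℝ) * Pz μ k := by
            field_simp
  have hsq : Summable (fun k : ℕ => (k:ℝ)^2 * Pz μ k) := by
    have := summable_sq μ hμ0.le; simpa [mul_comm] using this
  have hs : Summable (fun k : ℕ => Real.log μ * ((k:ℝ) * Pz μ k) + (1/μ) * ((k:ℝ)^2 * Pz μ k)
      - (k:ℝ) * Pz μ k) :=
    (((summable_kPz μ hμ0.le).mul_left _).add (hsq.mul_left _)).sub (summable_kPz μ hμ0.le)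
  calc ∑' k : ℕ, Pz μ k * ((k:ℝ) * Real.log k)
      ≤ ∑' k : ℕ, (Real.log μ * ((k:ℝ) * Pz μ k) + (1/μ) * ((k:ℝ)^2 * Pz μ k) - (k:ℝ) * Pz μ k) :=
        Summable.tsum_le_tsum hb (summable_klogPz μ hμ0.le) hs
    _ = Real.log μ * μ + (1/μ) * (μ^2 + μ) - μ := by
        rw [Summable.tsum_sub (((summable_kPz μ hμ0.le).mul_left _).add (hsq.mul_left _)) (summable_kPz μ hμ0.le),
          Summable.tsum_add ((summable_kPz μ hμ0.le).mul_left _) (hsq.mul_left _),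
          tsum_mul_left, tsum_mul_left, tsum_kPz μ hμ0.le, tsum_sqPz μ hμ0.le]
    _ = μ * Real.log μ + 1 := by field_simp; ring

lemma tsum_S2 {μ : ℝ} (hμ : 1 ≤ μ) :
    ∑' k : ℕ, Pz μ k * Real.log (Nat.factorial k : ℝ) ≤
      (∑' k : ℕ, Pz μ k * ((k:ℝ) * Real.log k)) - μ
        + (1/2) * (∑' k : ℕ, Pz μ k * Real.log k) + 1 := by
  have hμ0 : (0:ℝ) < μ := by linarith
  have hb : ∀ k : ℕ, Pz μ k * Real.log (Nat.factorial k : ℝ) ≤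
      Pz μ k * ((k:ℝ) * Real.log k) - (k:ℝ) * Pz μ k
        + (1/2) * (Pz μ k * Real.log k) + Pz μ k := by
    intro k
    have hp : 0 ≤ Pz μ k := by unfold Pz; positivity
    have := mul_le_mul_of_nonneg_left (stirling_bound k) hp
    calc Pz μ k * Real.log (Nat.factorial k : ℝ)
        ≤ Pz μ k * ((k:ℝ) * Real.log k - k + (1/2) * Real.log k + 1) := this
      _ = Pz μ k * ((k:ℝ) * Real.log k) - (k:ℝ) * Pz μ k
          + (1/2) * (Pz μ k * Real.log k) + Pz μ k := by ring
  have s1 := summable_klogPz μ hμ0.le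
  have s2 := summable_kPz μ hμ0.le
  have s3 := (summable_logPz μ hμ0.le).mul_left (1/2 : ℝ)
  have s4 := summable_Pz μ
  have hs : Summable (fun k : ℕ => Pz μ k * ((k:ℝ) * Real.log k) - (k:ℝ) * Pz μ k
      + (1/2) * (Pz μ k * Real.log k) + Pz μ k) := (((s1.sub s2).add s3).add s4)
  calc ∑' k : ℕ, Pz μ k * Real.log (Nat.factorial k : ℝ)
      ≤ ∑' k : ℕ, (Pz μ k * ((k:ℝ) * Real.log k) - (k:ℝ) * Pz μ k
          + (1/2) * (Pz μ k * Real.log k) + Pz μ k) :=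
        Summable.tsum_le_tsum hb (summable_logfactPz μ hμ0.le) hs
    _ = (∑' k : ℕ, Pz μ k * ((k:ℝ) * Real.log k)) - μ
        + (1/2) * (∑' k : ℕ, Pz μ k * Real.log k) + 1 := by
        rw [Summable.tsum_add ((s1.sub s2).add s3) s4, Summable.tsum_add (s1.sub s2) s3, Summable.tsum_sub s1 s2,
          tsum_mul_left, tsum_kPz μ hμ0.le, tsum_Pz]

/-- For `N ~ Poisson(μ)` with `μ ≥ 1`, the Shannon entropy in nats satisfies
`H(N) ≤ (ln μ)/2 + 3`. -/
theorem stmt_8 (μ : ℝ) (hμ : 1 ≤ μ) :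
    -(∑' k : ℕ, (Real.exp (-μ) * μ ^ k / (Nat.factorial k : ℝ)) *
        Real.log (Real.exp (-μ) * μ ^ k / (Nat.factorial k : ℝ)))
      ≤ Real.log μ / 2 + 3 := by
  have hμ0 : (0:ℝ) < μ := by linarith
  have key : ∀ k : ℕ, -(Pz μ k * Real.log (Pz μ k)) =
      μ * Pz μ k - Real.log μ * ((k:ℝ) * Pz μ k) + Pz μ k * Real.log (Nat.factorial k : ℝ) := by
    intro k
    have hf : ((Nat.factorial k : ℝ)) ≠ 0 := Nat.cast_ne_zero.mpr (Nat.factorial_ne_zero k)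
    have hlog : Real.log (Pz μ k) = -μ + (k:ℝ) * Real.log μ - Real.log (Nat.factorial k : ℝ) := by
      unfold Pz
      rw [Real.log_div (by positivity) hf, Real.log_mul (Real.exp_ne_zero _) (by positivity),
        Real.log_exp, Real.log_pow]
    rw [hlog]; ring
  have hre : -(∑' k : ℕ, (Real.exp (-μ) * μ ^ k / (Nat.factorial k : ℝ)) *
        Real.log (Real.exp (-μ) * μ ^ k / (Nat.factorial k : ℝ)))
      = ∑' k : ℕ, (μ * Pz μ k - Real.log μ * ((k:ℝ) * Pz μ k)
          + Pz μ k * Real.log (Nat.factorial k : ℝ)) := by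
    rw [← tsum_neg]
    exact tsum_congr key
  have s1 := (summable_Pz μ).mul_left μ
  have s2 := (summable_kPz μ hμ0.le).mul_left (Real.log μ)
  have s3 := summable_logfactPz μ hμ0.le
  have hsplit : ∑' k : ℕ, (μ * Pz μ k - Real.log μ * ((k:ℝ) * Pz μ k)
          + Pz μ k * Real.log (Nat.factorial k : ℝ))
      = μ * 1 - Real.log μ * μ + ∑' k : ℕ, Pz μ k * Real.log (Nat.factorial k : ℝ) := by
    rw [Summable.tsum_add (s1.sub s2) s3, Summable.tsum_sub s1 s2, tsum_mul_left, tsum_mul_left,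
      tsum_Pz, tsum_kPz μ hμ0.le]
  have hS2 := tsum_S2 hμ
  have hT := tsum_T hμ
  have hL := tsum_L hμ
  rw [hre, hsplit]
  have hlogμ : 0 ≤ Real.log μ := Real.log_nonneg hμ
  linarith
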